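/- For every p ∈ (0,1) and every ω ∈ ℂ, the family (p + (1−p) e^{ω/2^n})_{n≥1} is multipliable and ∏_{n=1}^∞ (p + (1−p) e^{ω/2^n}) = I_p(ω). -/

import Mathlib

open MeasureTheory

/-- The probability measure on `{0,1}` (encoded as `Bool`, `false` ↔ digit `0`,
`true` ↔ digit `1`) giving mass `p` to the digit `0` and mass `1 - p` to the digit `1`. -/
noncomputable def bernoulliBool (p : ℝ) : Measure Bool :=
  ENNReal.ofReal p • Measure.dirac false + ENNReal.ofReal (1 - p) • Measure.dirac true

/-- `ν` is the infinite product, over `n ≥ 1` (indexed here by `ℕ`, where index `n`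
stands for the digit `n+1`), of the Bernoulli measures `bernoulliBool p`:
it is characterized as the projective limit of the finite product measures. -/
def IsBernoulliProduct (p : ℝ) (ν : Measure (ℕ → Bool)) : Prop :=
  IsProjectiveLimit ν fun J : Finset ℕ => Measure.pi fun _ : J => bernoulliBool p

/-- The binary expansion map sending a 0-1 sequence `(x_n)_{n ≥ 1}` to
`∑_{n=1}^∞ x_n 2^{-n}` (index `n : ℕ` stands for the digit `n+1`). -/
noncomputable def binExpand (x : ℕ → Bool) : ℝ :=
  ∑' n : ℕ, if x n then ((2 : ℝ) ^ (n + 1))⁻¹ else 0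

/-- `μ` is the Bernoulli measure `μ_p` on `ℝ`: the pushforward under the binary
expansion map of the infinite product of Bernoulli measures on `{0,1}`. -/
def IsBernoulliMeasure (p : ℝ) (μ : Measure ℝ) : Prop :=
  ∃ ν : Measure (ℕ → Bool), IsBernoulliProduct p ν ∧ μ = ν.map binExpand

open Filter Topology

section Aux

/-- The value of the `n`-th digit of `x` (contributing to the binary expansion). -/
noncomputable def dval (n : ℕ) (x : ℕ → Bool) : ℝ := if x n then ((2 : ℝ) ^ (n + 1))⁻¹ else 0

lemma two_pow_inv_eq (n : ℕ) : ((2 : ℝ) ^ (n + 1))⁻¹ = 1/2/2^n := by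
  rw [pow_succ]; field_simp

lemma geo_summable : Summable (fun n : ℕ => ((2 : ℝ) ^ (n + 1))⁻¹) := by
  simpa only [two_pow_inv_eq] using summable_geometric_two' 1

lemma geo_tsum : ∑' n : ℕ, ((2 : ℝ) ^ (n + 1))⁻¹ = 1 := by
  simpa only [two_pow_inv_eq] using tsum_geometric_two' 1

lemma dval_nonneg (n : ℕ) (x : ℕ → Bool) : 0 ≤ dval n x := by
  unfold dval; split <;> positivity

lemma dval_le (n : ℕ) (x : ℕ → Bool) : dval n x ≤ ((2 : ℝ) ^ (n + 1))⁻¹ := by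
  unfold dval; split
  · exact le_rfl
  · positivity

lemma dval_summable (x : ℕ → Bool) : Summable (fun n => dval n x) :=
  Summable.of_nonneg_of_le (fun n => dval_nonneg n x) (fun n => dval_le n x) geo_summable

lemma binExpand_eq (x : ℕ → Bool) : binExpand x = ∑' n, dval n x := rfl

lemma binExpand_mem (x : ℕ → Bool) : binExpand x ∈ Set.Icc (0:ℝ) 1 := by
  constructor
  · exact tsum_nonneg (fun n => dval_nonneg n x)
  · rw [binExpand_eq, ← geo_tsum]
    exact Summable.tsum_le_tsum (fun n => dval_le n x) (dval_summable x) geo_summable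

lemma dval_measurable (n : ℕ) : Measurable (dval n) :=
  (measurable_of_countable (fun b : Bool => if b then ((2 : ℝ) ^ (n + 1))⁻¹ else 0)).comp
    (measurable_pi_apply n)

lemma binExpand_measurable : Measurable binExpand := by
  apply measurable_of_tendsto_metrizable
    (f := fun N x => ∑ n ∈ Finset.range N, dval n x)
  · exact fun N => Finset.measurable_sum _ (fun n _ => dval_measurable n)
  · rw [tendsto_pi_nhds]
    exact fun x => (dval_summable x).hasSum.tendsto_sum_nat

lemma bern_prob {p : ℝ} (hp : p ∈ Set.Ioo (0:ℝ) 1) : IsProbabilityMeasure (bernoulliBool p) := by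
  constructor
  have h1 : (0:ℝ) ≤ p := hp.1.le
  have h2 : (0:ℝ) ≤ 1 - p := by linarith [hp.2]
  simp [bernoulliBool, ← ENNReal.ofReal_add h1 h2]

lemma bern_integral {p : ℝ} (hp : p ∈ Set.Ioo (0:ℝ) 1) (g : Bool → ℂ) :
    ∫ b, g b ∂(bernoulliBool p) = (p:ℂ) * g false + (1 - (p:ℂ)) * g true := by
  have h1 : (0:ℝ) ≤ p := hp.1.le
  have h2 : (0:ℝ) ≤ 1 - p := by linarith [hp.2]
  have hi1 : Integrable g (ENNReal.ofReal p • Measure.dirac false) :=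
    (Integrable.of_finite).smul_measure ENNReal.ofReal_ne_top
  have hi2 : Integrable g (ENNReal.ofReal (1-p) • Measure.dirac true) :=
    (Integrable.of_finite).smul_measure ENNReal.ofReal_ne_top
  rw [bernoulliBool, integral_add_measure hi1 hi2, integral_smul_measure, integral_smul_measure,
    integral_dirac, integral_dirac, ENNReal.toReal_ofReal h1, ENNReal.toReal_ofReal h2]
  push_cast
  simp [Complex.real_smul]

lemma pi_integral {p : ℝ} (hp : p ∈ Set.Ioo (0:ℝ) 1) (J : Finset ℕ) (g : ℕ → Bool → ℂ) :
    ∫ y : ∀ _ : J, Bool, ∏ i : J, g i (y i) ∂(Measure.pi fun _ : J => bernoulliBool p)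
      = ∏ i : J, ∫ b, g i b ∂(bernoulliBool p) := by
  letI : MeasureSpace Bool := ⟨bernoulliBool p⟩
  haveI : IsProbabilityMeasure (volume : Measure Bool) := bern_prob hp
  exact MeasureTheory.integral_fintype_prod_eq_prod (fun (i : J) b => g i b) (μ := fun _ => bernoulliBool p)

lemma range_prod_integral {p : ℝ} (hp : p ∈ Set.Ioo (0:ℝ) 1) {ν : Measure (ℕ → Bool)}
    (hν : IsBernoulliProduct p ν) (g : ℕ → Bool → ℂ) (J : Finset ℕ) :
    ∫ x, ∏ n ∈ J, g n (x n) ∂ν = ∏ n ∈ J, ∫ b, g n b ∂(bernoulliBool p) := by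
  have hres : Measurable (J.restrict (π := fun _ => Bool)) :=
    measurable_pi_lambda _ fun j => measurable_pi_apply _
  have hgm : Measurable (fun y : ∀ _ : J, Bool => ∏ i : J, g i (y i)) :=
    Finset.measurable_prod _ (fun i _ => (measurable_of_countable _).comp (measurable_pi_apply i))
  calc ∫ x, ∏ n ∈ J, g n (x n) ∂ν
      = ∫ x, (fun y : ∀ _ : J, Bool => ∏ i : J, g i (y i)) (J.restrict x) ∂ν := by
        refine integral_congr_ae (Eventually.of_forall fun x => ?_)
        simp only [Finset.restrict]
        exact (Finset.prod_coe_sort J (fun n => g n (x n))).symm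
    _ = ∫ y, ∏ i : J, g i (y i) ∂(ν.map (J.restrict)) :=
        (integral_map hres.aemeasurable hgm.aestronglyMeasurable).symm
    _ = ∫ y, ∏ i : J, g i (y i) ∂(Measure.pi fun _ : J => bernoulliBool p) := by rw [hν J]
    _ = ∏ i : J, ∫ b, g i b ∂(bernoulliBool p) := pi_integral hp J g
    _ = ∏ n ∈ J, ∫ b, g n b ∂(bernoulliBool p) :=
        Finset.prod_coe_sort J (fun n => ∫ b, g n b ∂(bernoulliBool p))

lemma norm_div_two_pow (ω : ℂ) (n : ℕ) : ‖ω / 2^(n+1)‖ = ‖ω‖ * (1/2/2^n) := by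
  rw [norm_div, norm_pow]
  simp only [Complex.norm_ofNat]
  rw [pow_succ]
  ring

lemma geo_tendsto (ω : ℂ) : Tendsto (fun n : ℕ => ‖ω‖ * (1/2/2^n)) atTop (𝓝 0) := by
  have h := tendsto_pow_atTop_nhds_zero_of_lt_one (r := (1/2:ℝ)) (by norm_num) (by norm_num)
  have h2 := h.const_mul (‖ω‖/2)
  rw [mul_zero] at h2
  refine h2.congr fun n => ?_
  rw [div_pow, one_pow]
  ring

lemma stmt7_mult (p : ℝ) (hp : p ∈ Set.Ioo (0 : ℝ) 1) (ω : ℂ) :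
    Multipliable (fun n : ℕ => (p : ℂ) + (1 - p) * Complex.exp (ω / 2 ^ (n + 1))) := by
  set f : ℕ → ℂ := fun n => (p : ℂ) + (1 - p) * Complex.exp (ω / 2 ^ (n + 1)) with hf
  have fact_eq : ∀ n, f n = 1 + (1 - (p:ℂ)) * (Complex.exp (ω / 2^(n+1)) - 1) := by
    intro n; rw [hf]; ring
  by_cases hz : ∀ n, f n ≠ 0
  · have hev : ∀ᶠ n in atTop, ‖ω‖ * (1/2/2^n) < 1/4 :=
      (geo_tendsto ω).eventually_lt_const (by norm_num)
    have hlog : Summable fun n => Complex.log (f n) := by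
      apply Summable.of_norm_bounded_eventually_nat (g := fun n => 3*‖ω‖*(1/2/2^n))
      · have := (summable_geometric_two' 1).mul_left (3*‖ω‖)
        refine this.congr fun n => by ring
      · filter_upwards [hev] with n hn
        have h1p0 : (0:ℝ) ≤ 1 - p := by linarith [hp.2]
        have hnn : (0:ℝ) ≤ ‖ω‖ * (1/2/2^n) := by positivity
        have hz1 : ‖ω / 2^(n+1)‖ ≤ 1 := by rw [norm_div_two_pow]; linarith
        have hexp : ‖Complex.exp (ω / 2^(n+1)) - 1‖ ≤ 2 * ‖ω / 2^(n+1)‖ := by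
          exact Complex.norm_exp_sub_one_le (x := ω / 2^(n+1)) hz1
        have hnp : ‖(1 - (p:ℂ))‖ ≤ 1 := by
          rw [show (1 - (p:ℂ)) = ((1 - p : ℝ) : ℂ) by push_cast; ring, Complex.norm_real,
            Real.norm_eq_abs, abs_of_nonneg h1p0]
          linarith [hp.1]
        have hδ : ‖(1 - (p:ℂ)) * (Complex.exp (ω / 2^(n+1)) - 1)‖ ≤ 2 * (‖ω‖ * (1/2/2^n)) := by
          rw [norm_mul]
          calc ‖(1 - (p:ℂ))‖ * ‖Complex.exp (ω / 2^(n+1)) - 1‖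
              ≤ 1 * (2 * ‖ω / 2^(n+1)‖) := by
                apply mul_le_mul hnp hexp (norm_nonneg _) zero_le_one
            _ = 2 * (‖ω‖ * (1/2/2^n)) := by rw [one_mul, norm_div_two_pow]
        have hδhalf : ‖(1 - (p:ℂ)) * (Complex.exp (ω / 2^(n+1)) - 1)‖ ≤ 1/2 := by linarith
        calc ‖Complex.log (f n)‖
            = ‖Complex.log (1 + (1 - (p:ℂ)) * (Complex.exp (ω / 2^(n+1)) - 1))‖ := by
              rw [fact_eq]
          _ ≤ 3/2 * ‖(1 - (p:ℂ)) * (Complex.exp (ω / 2^(n+1)) - 1)‖ :=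
              Complex.norm_log_one_add_half_le_self hδhalf
          _ ≤ 3*‖ω‖*(1/2/2^n) := by linarith
    exact Complex.multipliable_of_summable_log hlog
  · push_neg at hz
    obtain ⟨n₀, h0⟩ := hz
    refine HasProd.multipliable (a := 0) ?_
    refine Tendsto.congr' ?_ tendsto_const_nhds
    filter_upwards [eventually_ge_atTop ({n₀} : Finset ℕ)] with s hs
    exact (Finset.prod_eq_zero (hs (Finset.mem_singleton_self n₀)) h0).symm

end Aux

/-- For `p ∈ (0,1)` and `ω ∈ ℂ`, the family
`(p + (1-p) e^{ω/2^n})_{n ≥ 1}` is multipliable and its product equals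
`I_p(ω) = ∫_0^1 e^{ωx} dμ_p(x)` (index `n : ℕ` stands for `n+1 ≥ 1`). -/
theorem stmt7 (p : ℝ) (hp : p ∈ Set.Ioo (0 : ℝ) 1) (μ : Measure ℝ)
    (hμ : IsBernoulliMeasure p μ) (ω : ℂ) :
    Multipliable (fun n : ℕ => (p : ℂ) + (1 - p) * Complex.exp (ω / 2 ^ (n + 1))) ∧
      ∏' n : ℕ, ((p : ℂ) + (1 - p) * Complex.exp (ω / 2 ^ (n + 1))) =
        ∫ x in Set.Icc (0 : ℝ) 1, Complex.exp (ω * x) ∂μ := by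
  obtain ⟨ν, hνproj, hmap⟩ := hμ
  haveI := bern_prob hp
  haveI : IsProbabilityMeasure ν := hνproj.isProbabilityMeasure
  refine ⟨stmt7_mult p hp ω, ?_⟩
  -- the digit factor functions
  set g : ℕ → Bool → ℂ :=
    fun n b => Complex.exp (ω * ((if b then ((2 : ℝ) ^ (n + 1))⁻¹ else 0 : ℝ) : ℂ)) with hg
  -- value of the one-digit integrals
  have hgint : ∀ n, ∫ b, g n b ∂(bernoulliBool p)
      = (p : ℂ) + (1 - p) * Complex.exp (ω / 2 ^ (n + 1)) := by
    intro n
    rw [bern_integral hp]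
    have hfalse : g n false = 1 := by simp [hg]
    have htrue : g n true = Complex.exp (ω / 2 ^ (n + 1)) := by
      simp only [hg, if_true]
      congr 1
      push_cast
      rw [div_eq_mul_inv]
    rw [hfalse, htrue]
    ring
  -- the partial products of digit factors
  have hprod_eq : ∀ N x, ∏ n ∈ Finset.range N, g n (x n)
      = Complex.exp (ω * ((∑ n ∈ Finset.range N, dval n x : ℝ) : ℂ)) := by
    intro N x
    have h1 : (ω * ((∑ n ∈ Finset.range N, dval n x : ℝ) : ℂ))
        = ∑ n ∈ Finset.range N, ω * ((dval n x : ℝ) : ℂ) := by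
      push_cast
      rw [Finset.mul_sum]
    rw [h1, Complex.exp_sum]
    rfl
  -- partial sums of digits are in [0,1]
  have hpsum_mem : ∀ N x, (∑ n ∈ Finset.range N, dval n x) ∈ Set.Icc (0:ℝ) 1 := by
    intro N x
    constructor
    · exact Finset.sum_nonneg fun n _ => dval_nonneg n x
    · refine le_trans (Summable.sum_le_tsum (Finset.range N) (fun n _ => dval_nonneg n x)
        (dval_summable x)) ?_
      exact (binExpand_mem x).2
  -- dominated convergence
  have hdct : Tendsto (fun N => ∫ x, ∏ n ∈ Finset.range N, g n (x n) ∂ν) atTop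
      (𝓝 (∫ x, Complex.exp (ω * ((binExpand x : ℝ) : ℂ)) ∂ν)) := by
    refine tendsto_integral_of_dominated_convergence (fun _ => Real.exp |ω.re|) ?_ ?_ ?_ ?_
    · intro N
      refine Measurable.aestronglyMeasurable ?_
      exact Finset.measurable_prod _ fun n _ =>
        Complex.measurable_exp.comp <| (measurable_const.mul <|
          Complex.measurable_ofReal.comp (dval_measurable n))
    · exact integrable_const _
    · intro N
      refine Eventually.of_forall fun x => ?_
      rw [hprod_eq]
      have hmem := hpsum_mem N x
      rw [Complex.norm_exp]
      apply Real.exp_le_exp.2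
      have : (ω * ((∑ n ∈ Finset.range N, dval n x : ℝ) : ℂ)).re
          = ω.re * (∑ n ∈ Finset.range N, dval n x) := by
        simp [Complex.mul_re]
      rw [this]
      rcases le_or_gt 0 ω.re with h | h
      · calc ω.re * (∑ n ∈ Finset.range N, dval n x) ≤ ω.re * 1 :=
            mul_le_mul_of_nonneg_left hmem.2 h
          _ ≤ |ω.re| := by rw [mul_one]; exact le_abs_self _
      · calc ω.re * (∑ n ∈ Finset.range N, dval n x) ≤ 0 :=
            mul_nonpos_of_nonpos_of_nonneg h.le hmem.1
          _ ≤ |ω.re| := abs_nonneg _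
    · refine Eventually.of_forall fun x => ?_
      have h1 : Tendsto (fun N => ∑ n ∈ Finset.range N, dval n x) atTop (𝓝 (binExpand x)) :=
        (dval_summable x).hasSum.tendsto_sum_nat
      have hc : Continuous fun s : ℝ => Complex.exp (ω * (s : ℂ)) :=
        Complex.continuous_exp.comp (continuous_const.mul Complex.continuous_ofReal)
      have := (hc.tendsto (binExpand x)).comp h1
      refine this.congr fun N => ?_
      rw [hprod_eq]
      rfl
  -- identify the partial integrals with partial products
  have hint_eq : ∀ N, ∫ x, ∏ n ∈ Finset.range N, g n (x n) ∂ν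
      = ∏ n ∈ Finset.range N, ((p : ℂ) + (1 - p) * Complex.exp (ω / 2 ^ (n + 1))) := by
    intro N
    rw [range_prod_integral hp hνproj g (Finset.range N)]
    exact Finset.prod_congr rfl fun n _ => hgint n
  have htend : Tendsto (fun N => ∏ n ∈ Finset.range N,
      ((p : ℂ) + (1 - p) * Complex.exp (ω / 2 ^ (n + 1)))) atTop
      (𝓝 (∫ x, Complex.exp (ω * ((binExpand x : ℝ) : ℂ)) ∂ν)) := by
    refine hdct.congr fun N => ?_
    exact hint_eq N
  have htprod := (stmt7_mult p hp ω).hasProd.tendsto_prod_nat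
  have hmain : ∏' n : ℕ, ((p : ℂ) + (1 - p) * Complex.exp (ω / 2 ^ (n + 1)))
      = ∫ x, Complex.exp (ω * ((binExpand x : ℝ) : ℂ)) ∂ν :=
    tendsto_nhds_unique htprod htend
  -- rewrite the right-hand side
  have hrestrict : μ.restrict (Set.Icc (0:ℝ) 1) = μ := by
    refine Measure.restrict_eq_self_of_ae_mem ?_
    rw [hmap]
    exact (ae_map_iff binExpand_measurable.aemeasurable measurableSet_Icc).2
      (Eventually.of_forall binExpand_mem)
  have hrhs : ∫ x in Set.Icc (0 : ℝ) 1, Complex.exp (ω * x) ∂μ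
      = ∫ x, Complex.exp (ω * ((binExpand x : ℝ) : ℂ)) ∂ν := by
    rw [hrestrict, hmap]
    exact integral_map binExpand_measurable.aemeasurable
      (Continuous.aestronglyMeasurable <|
        Complex.continuous_exp.comp (continuous_const.mul Complex.continuous_ofReal))
  rw [hrhs, hmain]
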